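/- Let γ : (t_0, ∞) → ℂ be an admissible curve. Then: (1) if a ∈ ℂ lies outside the closure of γ((t_0, ∞)) and |γ'(t)| is bounded as t ↘ t_0, then α(γ, a) is finite; (2) for every t_1 > t_0, α(γ|_{(t_1, ∞)}, γ(t_1)) is finite; (3) for every t_1 > t_0, α(γ'|_{(t_1, ∞)}, 0) is finite. -/

import Mathlib

open Filter Topology Set MeasureTheory
open scoped ENNReal Real

/-- The variation number `α(γ|_{(t₀,∞)}, a)` of a curve `γ` around `a`. -/
noncomputable def variation (γ : ℝ → ℂ) (t0 : ℝ) (a : ℂ) : ℝ≥0∞ :=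
  ENNReal.ofReal (1 / (2 * Real.pi)) *
    ∫⁻ t in Set.Ioi t0, ENNReal.ofReal |(deriv γ t / (γ t - a)).im|

/-- An admissible curve on `(t₀, ∞)`: injective, `C²`, nonvanishing derivative, and with
`|γ(t)| = t + O(1)`, `|γ'(t)| = 1 + O(1/t)`, `|γ''(t)| = O(1/t²)` as `t → ∞`. -/
def Admissible (t0 : ℝ) (γ : ℝ → ℂ) : Prop :=
  Set.InjOn γ (Set.Ioi t0) ∧ ContDiffOn ℝ 2 γ (Set.Ioi t0) ∧
  (∀ t ∈ Set.Ioi t0, deriv γ t ≠ 0) ∧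
  (∃ c : ℝ, ∀ᶠ t in Filter.atTop, |‖γ t‖ - t| ≤ c) ∧
  (∃ c : ℝ, ∀ᶠ t in Filter.atTop, |‖deriv γ t‖ - 1| ≤ c / t) ∧
  (∃ c : ℝ, ∀ᶠ t in Filter.atTop, ‖deriv (deriv γ) t‖ ≤ c / t ^ 2)

section AuxLemmas

lemma abs_im_div_le (z w : ℂ) : |(z / w).im| ≤ ‖z‖ / ‖w‖ := by
  calc |(z/w).im| ≤ ‖z/w‖ := Complex.abs_im_le_norm _
  _ = _ := norm_div z w

lemma lint_Ioc_lt_top_of_bound {a b M : ℝ} {f : ℝ → ℝ}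
    (h : ∀ t ∈ Ioc a b, f t ≤ M) :
    ∫⁻ t in Ioc a b, ENNReal.ofReal (f t) < ⊤ := by
  calc ∫⁻ t in Ioc a b, ENNReal.ofReal (f t)
      ≤ ∫⁻ _ in Ioc a b, ENNReal.ofReal M :=
        setLIntegral_mono' measurableSet_Ioc (fun x hx => ENNReal.ofReal_le_ofReal (h x hx))
    _ = ENNReal.ofReal M * volume (Ioc a b) := by rw [setLIntegral_const]
    _ < ⊤ := ENNReal.mul_lt_top ENNReal.ofReal_lt_top measure_Ioc_lt_top

lemma lint_lt_top_of_le_integrable {s : Set ℝ} (hs : MeasurableSet s) {f g : ℝ → ℝ}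
    (hg : IntegrableOn g s) (h : ∀ t ∈ s, f t ≤ g t) :
    ∫⁻ t in s, ENNReal.ofReal (f t) < ⊤ :=
  (setLIntegral_mono' hs fun x hx => ENNReal.ofReal_le_ofReal (h x hx)).trans_lt
    hg.lintegral_lt_top

lemma lint_Ioc_lt_top_of_continuousOn {a b : ℝ} {f : ℝ → ℝ}
    (h : ContinuousOn f (Icc a b)) :
    ∫⁻ t in Ioc a b, ENNReal.ofReal (f t) < ⊤ :=
  ((h.integrableOn_Icc).mono_set Ioc_subset_Icc_self).lintegral_lt_top

lemma amgm_abs (b x : ℝ) (hb : 0 < b) : |x| ≤ b * x^2 + 1/b := by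
  have hb' : b * (1/b) = 1 := by field_simp
  nlinarith [sq_nonneg (b*|x| - 1), sq_abs x, abs_nonneg x, hb, mul_pos hb hb]

lemma lintegral_split3 {t1 s B : ℝ} (h1 : t1 ≤ s) (h2 : s ≤ B) (f : ℝ → ℝ≥0∞) :
    ∫⁻ t in Ioi t1, f t
      = ((∫⁻ t in Ioc t1 s, f t) + ∫⁻ t in Ioc s B, f t) + ∫⁻ t in Ioi B, f t := by
  rw [← Ioc_union_Ioi_eq_Ioi (le_trans h1 h2),
    lintegral_union measurableSet_Ioi (Ioc_disjoint_Ioi le_rfl),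
    ← Ioc_union_Ioc_eq_Ioc h1 h2,
    lintegral_union measurableSet_Ioc (Ioc_disjoint_Ioc_of_le le_rfl)]

end AuxLemmas


lemma key_ineq (z w : ℂ) {τ B : ℝ} (hτ : 0 < τ) (hr : τ ≤ ‖w‖)
    (hB : ‖z‖ ^ 2 ≤ B) :
    ((z / w).im)^2 ≤
      (B + 1 - 2 * ((w.re * z.re + w.im * z.im) / Real.sqrt (Complex.normSq w))) / τ^2 := by
  have hw0 : (0:ℝ) < ‖w‖ := lt_of_lt_of_le hτ hr
  have hsq : Real.sqrt (Complex.normSq w) = ‖w‖ := (Complex.norm_def w).symm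
  have hN : Complex.normSq w = ‖w‖ ^ 2 := (Complex.sq_norm w).symm
  set aw := ‖w‖ with haw
  have haw2 : aw^2 = w.re^2 + w.im^2 := by
    rw [← hN, Complex.normSq_apply]; ring
  have him : (z / w).im = (z.im * w.re - z.re * w.im) / aw^2 := by
    rw [Complex.div_im, hN]; ring
  have habs : z.re^2 + z.im^2 ≤ B := by
    have h2 : ‖z‖ ^ 2 = z.re^2 + z.im^2 := by
      rw [Complex.sq_norm z, Complex.normSq_apply]; ring
    linarith [h2 ▸ hB]
  rw [him, hsq]
  set Q := z.im * w.re - z.re * w.im with hQ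
  set P := w.re * z.re + w.im * z.im with hP
  have hlagrange : Q^2 + P^2 = aw^2 * (z.re^2 + z.im^2) := by rw [haw2]; ring
  rw [div_pow, div_le_div_iff₀ (by positivity) (by positivity)]
  have hexp : (B + 1 - 2 * (P / aw)) * (aw ^ 2) ^ 2
      = (B+1) * aw^4 - 2*P*aw^3 := by field_simp
  rw [hexp]
  nlinarith [sq_nonneg (aw^2 - aw*P), sq_nonneg Q, sq_nonneg aw, sq_nonneg (aw*τ),
    mul_pos hw0 hw0, mul_le_mul_of_nonneg_left (mul_le_mul hr hr hτ.le hw0.le) (sq_nonneg Q)]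

lemma hasDerivAt_re_comp {u : ℝ → ℂ} {u' : ℂ} {t : ℝ} (hu : HasDerivAt u u' t) :
    HasDerivAt (fun s => (u s).re) u'.re t :=
  Complex.reCLM.hasFDerivAt.comp_hasDerivAt t hu

lemma hasDerivAt_im_comp {u : ℝ → ℂ} {u' : ℂ} {t : ℝ} (hu : HasDerivAt u u' t) :
    HasDerivAt (fun s => (u s).im) u'.im t :=
  Complex.imCLM.hasFDerivAt.comp_hasDerivAt t hu

lemma hasDerivAt_abs_comp {u : ℝ → ℂ} {u' : ℂ} {t : ℝ} (hu : HasDerivAt u u' t)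
    (h0 : u t ≠ 0) :
    HasDerivAt (fun s => ‖u s‖)
      (((u t).re * u'.re + (u t).im * u'.im) / ‖u t‖) t := by
  have hre := hasDerivAt_re_comp hu
  have him := hasDerivAt_im_comp hu
  have hN : HasDerivAt (fun s => (u s).re^2 + (u s).im^2)
      (2*(u t).re*u'.re + 2*(u t).im*u'.im) t := by
    have := ((hre.pow 2).add (him.pow 2))
    exact this.congr_deriv (by ring)
  have hne : (u t).re^2 + (u t).im^2 ≠ 0 := by
    have : Complex.normSq (u t) ≠ 0 := by simpa [Complex.normSq_eq_zero] using h0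
    rwa [Complex.normSq_apply, ← pow_two, ← pow_two] at this
  have hs := (Real.hasDerivAt_sqrt hne).comp t hN
  have habs : (fun s => ‖u s‖)
      = fun s => Real.sqrt ((u s).re^2 + (u s).im^2) := by
    funext s
    rw [Complex.norm_def, Complex.normSq_apply]; ring_nf
  rw [habs]
  refine hs.congr_deriv ?_
  rw [Complex.norm_def, Complex.normSq_apply]
  have h2 : (u t).re * (u t).re + (u t).im * (u t).im = (u t).re^2 + (u t).im^2 := by ring
  rw [h2]
  field_simp

lemma block_bound {γ : ℝ → ℂ} {a : ℂ} {C T1 T : ℝ}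
    (hC : 1 ≤ C) (hT1C : 4 * C ≤ T1)
    (hd : ∀ t ∈ Ici T1, HasDerivAt γ (deriv γ t) t)
    (hcont : ContinuousOn (deriv γ) (Ici T1))
    (hcontγ : ContinuousOn γ (Ici T1))
    (hlow : ∀ t ∈ Ici T1, t - C ≤ ‖γ t - a‖)
    (hhigh : ∀ t ∈ Ici T1, ‖γ t - a‖ ≤ t + C)
    (hg : ∀ t ∈ Ici T1, ‖deriv γ t‖ ^ 2 ≤ 1 + C / t)
    (hT : T1 ≤ T) :
    ∫⁻ t in Ioc T (2*T),
        ENNReal.ofReal (t * Real.sqrt t * ((deriv γ t / (γ t - a)).im)^2)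
      ≤ ENNReal.ofReal (80 * C / Real.sqrt T) := by
  have hC0 : 0 < C := lt_of_lt_of_le one_pos hC
  have hTpos : 0 < T := lt_of_lt_of_le (by linarith) hT
  have h4C : 4*C ≤ T := le_trans hT1C hT
  have hTC : 0 < T - C := by linarith
  have h2T : T ≤ 2*T := by linarith
  have hsub : Icc T (2*T) ⊆ Ici T1 := fun x hx => le_trans hT hx.1
  have hne : ∀ t ∈ Ici T1, γ t - a ≠ 0 := by
    intro t ht h0
    have h1 := hlow t ht
    rw [h0] at h1
    simp only [norm_zero] at h1
    have h2 : T1 ≤ t := ht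
    linarith
  set Im : ℝ → ℝ := fun t => (deriv γ t / (γ t - a)).im with hIm
  set r : ℝ → ℝ := fun t => ‖γ t - a‖ with hrdef
  set p : ℝ → ℝ := fun t =>
    ((γ t - a).re * (deriv γ t).re + (γ t - a).im * (deriv γ t).im) / r t with hpdef
  have hpd : ∀ t ∈ Icc T (2*T), HasDerivAt r (p t) t := fun t ht =>
    hasDerivAt_abs_comp ((hd t (hsub ht)).sub_const a) (hne t (hsub ht))
  have hucont : ContinuousOn (fun t => γ t - a) (Icc T (2*T)) :=
    (hcontγ.mono hsub).sub continuousOn_const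
  have hrcont : ContinuousOn r (Icc T (2*T)) :=
    continuous_norm.comp_continuousOn hucont
  have hrpos : ∀ t ∈ Icc T (2*T), 0 < r t := fun t ht =>
    lt_of_lt_of_le (show (0:ℝ) < t - C by have := ht.1; linarith) (hlow t (hsub ht))
  have hDcont : ContinuousOn (deriv γ) (Icc T (2*T)) := hcont.mono hsub
  have hpcont : ContinuousOn p (Icc T (2*T)) := by
    apply ContinuousOn.div
    · exact ((Complex.continuous_re.comp_continuousOn hucont).mul
        (Complex.continuous_re.comp_continuousOn hDcont)).add
        ((Complex.continuous_im.comp_continuousOn hucont).mul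
        (Complex.continuous_im.comp_continuousOn hDcont))
    · exact hrcont
    · exact fun t ht => (hrpos t ht).ne'
  have hImcont : ContinuousOn Im (Icc T (2*T)) :=
    Complex.continuous_im.comp_continuousOn
      (hDcont.div hucont (fun t ht => hne t (hsub ht)))
  have hImsqInt : IntegrableOn (fun t => (Im t)^2) (Ioc T (2*T)) :=
    ((hImcont.pow 2).integrableOn_Icc).mono_set Ioc_subset_Icc_self
  have hptwise : ∀ t ∈ Icc T (2*T), (Im t)^2 ≤ (2 + C/t - 2 * p t) / (T - C)^2 := by
    intro t ht
    have h1 := key_ineq (deriv γ t) (γ t - a) (τ := T - C) (B := 1 + C/t) hTC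
      (le_trans (by linarith [ht.1] : T - C ≤ t - C) (hlow t (hsub ht)))
      (hg t (hsub ht))
    calc (Im t)^2 ≤ (1 + C/t + 1 - 2 * (((γ t - a).re * (deriv γ t).re
          + (γ t - a).im * (deriv γ t).im) / Real.sqrt (Complex.normSq (γ t - a))))
          / (T - C)^2 := h1
    _ = (2 + C/t - 2 * p t)/(T-C)^2 := by
        rw [hpdef]
        simp only [hrdef, Complex.norm_def]
        ring_nf
  have htne : ∀ t ∈ Icc T (2*T), t ≠ 0 := fun t ht =>
    ne_of_gt (lt_of_lt_of_le hTpos ht.1)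
  have hRHScont : ContinuousOn (fun t => (2 + C/t - 2*p t)/(T-C)^2) (Icc T (2*T)) := by
    apply ContinuousOn.div_const
    exact (continuousOn_const.add (continuousOn_const.div continuousOn_id htne)).sub
      (continuousOn_const.mul hpcont)
  have hRHSint : IntegrableOn (fun t => (2 + C/t - 2*p t)/(T-C)^2) (Ioc T (2*T)) :=
    hRHScont.integrableOn_Icc.mono_set Ioc_subset_Icc_self
  have hmono := setIntegral_mono_on hImsqInt hRHSint measurableSet_Ioc
    (fun t ht => hptwise t (Ioc_subset_Icc_self ht))
  have hi1 : IntervalIntegrable (fun t => 2 + C/t) volume T (2*T) := by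
    apply ContinuousOn.intervalIntegrable
    rw [uIcc_of_le h2T]
    exact continuousOn_const.add (continuousOn_const.div continuousOn_id htne)
  have hi2 : IntervalIntegrable p volume T (2*T) := by
    apply ContinuousOn.intervalIntegrable
    rwa [uIcc_of_le h2T]
  have hFTC : ∫ t in T..(2*T), p t = r (2*T) - r T :=
    intervalIntegral.integral_eq_sub_of_hasDerivAt
      (fun x hx => hpd x (by rwa [uIcc_of_le h2T] at hx)) hi2
  have hlog : ∫ t in T..(2*T), (1:ℝ)/t = Real.log 2 := by
    rw [integral_one_div]
    · congr 1; field_simp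
    · rw [uIcc_of_le h2T]; intro hmem; exact absurd hmem.1 (by linarith)
  have hCt : IntervalIntegrable (fun t => C/t) volume T (2*T) := by
    apply ContinuousOn.intervalIntegrable
    rw [uIcc_of_le h2T]
    exact continuousOn_const.div continuousOn_id htne
  have hint1 : ∫ t in T..(2*T), (2 + C/t) = T * 2 + C * Real.log 2 := by
    rw [intervalIntegral.integral_add intervalIntegrable_const hCt]
    have h3 : ∫ t in T..(2*T), C/t = C * Real.log 2 := by
      have : ∀ t : ℝ, C/t = C * (1/t) := fun t => by ring
      simp_rw [this]
      rw [intervalIntegral.integral_const_mul, hlog]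
    rw [h3, intervalIntegral.integral_const]
    simp only [smul_eq_mul]
    ring
  have hr2T : 2*T - C ≤ r (2*T) := hlow (2*T) (by simp only [mem_Ici]; linarith)
  have hrT : r T ≤ T + C := hhigh T (by simp only [mem_Ici]; linarith)
  have hlog2 : Real.log 2 ≤ 1 := by
    have := Real.log_two_lt_d9; linarith
  have hIntBound : ∫ t in Ioc T (2*T), (Im t)^2 ≤ 20*C/T^2 := by
    refine hmono.trans ?_
    rw [← intervalIntegral.integral_of_le h2T]
    have hdiv : ∀ t : ℝ, (2 + C/t - 2*p t)/(T-C)^2 = (2 + C/t - 2*p t) * ((T-C)^2)⁻¹ :=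
      fun t => by ring
    simp_rw [hdiv]
    rw [intervalIntegral.integral_mul_const,
      intervalIntegral.integral_sub hi1 (hi2.const_mul 2),
      intervalIntegral.integral_const_mul, hint1, hFTC]
    rw [← div_eq_mul_inv]
    calc (T * 2 + C * Real.log 2 - 2 * (r (2*T) - r T)) / (T-C)^2
        ≤ (5*C) / (T-C)^2 := by
          gcongr
          linarith [mul_le_mul_of_nonneg_left hlog2 hC0.le, hr2T, hrT]
      _ ≤ 20*C/T^2 := by
          rw [div_le_div_iff₀ (by positivity) (by positivity)]
          have h1 : (0:ℝ) ≤ T - 2*C := by linarith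
          have h2 : (0:ℝ) ≤ 3*T - 2*C := by linarith
          nlinarith [mul_nonneg (mul_nonneg hC0.le h1) h2]
  have hImsqnn : 0 ≤ᵐ[volume.restrict (Ioc T (2*T))] fun t => (Im t)^2 :=
    ae_of_all _ (fun t => sq_nonneg _)
  have hsp : 0 < Real.sqrt T := Real.sqrt_pos.2 hTpos
  have hs : Real.sqrt T * Real.sqrt T = T := Real.mul_self_sqrt hTpos.le
  calc ∫⁻ t in Ioc T (2*T), ENNReal.ofReal (t * Real.sqrt t * (Im t)^2)
      ≤ ∫⁻ t in Ioc T (2*T),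
          ENNReal.ofReal (4*T*Real.sqrt T) * ENNReal.ofReal ((Im t)^2) := by
        apply setLIntegral_mono' measurableSet_Ioc
        intro t ht
        rw [← ENNReal.ofReal_mul (by positivity)]
        apply ENNReal.ofReal_le_ofReal
        apply mul_le_mul_of_nonneg_right _ (sq_nonneg _)
        have ht2 : t ≤ 2*T := ht.2
        have ht0 : 0 < t := lt_trans hTpos ht.1
        have h1 : Real.sqrt t ≤ 2*Real.sqrt T := by
          rw [show (2:ℝ)*Real.sqrt T = Real.sqrt 4 * Real.sqrt T by
              rw [show (4:ℝ) = 2^2 by norm_num, Real.sqrt_sq (by norm_num : (0:ℝ) ≤ 2)],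
            ← Real.sqrt_mul (by norm_num : (0:ℝ) ≤ 4)]
          exact Real.sqrt_le_sqrt (by linarith)
        calc t * Real.sqrt t ≤ (2*T)*(2*Real.sqrt T) :=
              mul_le_mul ht2 h1 (Real.sqrt_nonneg t) (by positivity)
          _ = 4*T*Real.sqrt T := by ring
    _ = ENNReal.ofReal (4*T*Real.sqrt T)
        * ∫⁻ t in Ioc T (2*T), ENNReal.ofReal ((Im t)^2) :=
        lintegral_const_mul' _ _ ENNReal.ofReal_ne_top
    _ = ENNReal.ofReal (4*T*Real.sqrt T)
        * ENNReal.ofReal (∫ t in Ioc T (2*T), (Im t)^2) := by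
        rw [← ofReal_integral_eq_lintegral_ofReal hImsqInt hImsqnn]
    _ ≤ ENNReal.ofReal (4*T*Real.sqrt T) * ENNReal.ofReal (20*C/T^2) :=
        mul_le_mul_right (ENNReal.ofReal_le_ofReal hIntBound) _
    _ = ENNReal.ofReal (4*T*Real.sqrt T * (20*C/T^2)) :=
        (ENNReal.ofReal_mul (by positivity)).symm
    _ = ENNReal.ofReal (80 * C / Real.sqrt T) := by
        congr 1
        have h1 : 80*C/Real.sqrt T = 80*C*Real.sqrt T/T := by
          rw [div_eq_div_iff hsp.ne' hTpos.ne']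
          linear_combination (-80*C)*hs
        rw [h1]
        field_simp
        ring

open scoped ENNReal Real

lemma sqrt_two_pow_mul (x : ℝ) (hx : 0 ≤ x) :
    ∀ k : ℕ, Real.sqrt (2^k * x) = (Real.sqrt 2)^k * Real.sqrt x := by
  intro k
  induction k with
  | zero => simp
  | succ n ih =>
    have h1 : (2:ℝ)^(n+1) * x = 2 * (2^n * x) := by ring
    rw [h1, Real.sqrt_mul (by norm_num : (0:ℝ) ≤ 2), ih, pow_succ]
    ring

lemma Ioi_eq_iUnion_Ioc {T1 : ℝ} (hT1 : 0 < T1) :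
    Ioi T1 = ⋃ k : ℕ, Ioc (2^k * T1) (2^(k+1) * T1) := by
  ext x
  simp only [mem_Ioi, mem_iUnion, mem_Ioc]
  constructor
  · intro hx
    have hex : ∃ k : ℕ, x ≤ 2^(k+1) * T1 := by
      obtain ⟨n, hn⟩ := pow_unbounded_of_one_lt (x / T1) (one_lt_two (α := ℝ))
      exact ⟨n, by
        have : x / T1 < 2^(n+1) := lt_of_lt_of_le hn (by
          apply pow_le_pow_right₀ (by norm_num); omega)
        calc x = (x / T1) * T1 := by field_simp
        _ ≤ 2^(n+1) * T1 := by nlinarith⟩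
    classical
    refine ⟨Nat.find hex, ?_, Nat.find_spec hex⟩
    rcases Nat.eq_zero_or_pos (Nat.find hex) with h0 | hpos
    · rw [h0]; simpa using hx
    · have hmin := Nat.find_min hex (Nat.sub_lt hpos one_pos)
      push_neg at hmin
      have : Nat.find hex - 1 + 1 = Nat.find hex := by omega
      rwa [this] at hmin
  · rintro ⟨k, h1, _⟩
    have : T1 ≤ 2^k * T1 := by
      nlinarith [one_le_pow₀ (by norm_num : (1:ℝ) ≤ 2) (n := k)]
    linarith

lemma disjoint_blocks {T1 : ℝ} (hT1 : 0 < T1) :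
    Pairwise (Function.onFun Disjoint fun k : ℕ => Ioc (2^k * T1) (2^(k+1) * T1)) := by
  have hmono : ∀ i j : ℕ, i ≤ j → (2:ℝ)^i * T1 ≤ 2^j * T1 := fun i j hij => by
    have := pow_le_pow_right₀ (by norm_num : (1:ℝ) ≤ 2) hij
    nlinarith
  have hd : ∀ i j : ℕ, i < j →
      Disjoint (Ioc ((2:ℝ)^i * T1) (2^(i+1) * T1)) (Ioc ((2:ℝ)^j * T1) (2^(j+1) * T1)) :=
    fun i j h => Set.Ioc_disjoint_Ioc.mpr (le_trans (min_le_left _ _)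
      (le_trans (hmono (i+1) j h) (le_max_right _ _)))
  intro i j hij
  rcases lt_or_gt_of_ne hij with h | h
  · exact hd i j h
  · exact (hd j i h).symm

lemma div_im_eq_mul_conj (z w : ℂ) :
    (z / w).im = (z * (starRingEnd ℂ) w).im / Complex.normSq w := by
  rw [Complex.div_im]
  simp [Complex.mul_im]
  ring

lemma local_bound_at_left {t0 t1 : ℝ} {γ : ℝ → ℂ} (h01 : t0 < t1)
    (hC2 : ContDiffOn ℝ 2 γ (Ioi t0)) (hder : deriv γ t1 ≠ 0) :
    ∃ s, t1 < s ∧ ∃ M : ℝ, ∀ t ∈ Ioc t1 s, |(deriv γ t / (γ t - γ t1)).im| ≤ M := by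
  have hopen : Ioi t0 ∈ 𝓝 t1 := isOpen_Ioi.mem_nhds h01
  have hd1 : ∀ u ∈ Ioi t0, HasDerivAt γ (deriv γ u) u := fun u hu =>
    ((hC2.differentiableOn (by norm_num)).differentiableAt
      (isOpen_Ioi.mem_nhds hu)).hasDerivAt
  have hC1' : ContDiffOn ℝ 1 (deriv γ) (Ioi t0) :=
    hC2.deriv_of_isOpen isOpen_Ioi (by norm_num)
  have hd2 : ∀ u ∈ Ioi t0, HasDerivAt (deriv γ) (deriv (deriv γ) u) u := fun u hu =>
    ((hC1'.differentiableOn (by norm_num)).differentiableAt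
      (isOpen_Ioi.mem_nhds hu)).hasDerivAt
  set m := ‖deriv γ t1‖ with hm
  have hm0 : 0 < m := by
    simp only [hm, norm_pos_iff]
    exact hder
  set M0 := ‖deriv (deriv γ) t1‖ + 1 with hM0
  set K := m + 1 with hK
  -- eventually facts near t1
  have hslope : Tendsto (fun u => ‖slope γ t1 u‖) (𝓝[≠] t1) (𝓝 m) :=
    (continuous_norm.continuousAt.tendsto).comp
      (hasDerivAt_iff_tendsto_slope.mp (hd1 t1 h01))
  have hev1 : ∀ᶠ u in 𝓝 t1, u ≠ t1 → m/2 < ‖slope γ t1 u‖ := by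
    have := hslope.eventually (eventually_gt_nhds (by linarith : m/2 < m))
    rwa [eventually_nhdsWithin_iff] at this
  have hcont1 : ContinuousAt (deriv γ) t1 :=
    (hC2.continuousOn_deriv_of_isOpen isOpen_Ioi (by norm_num)).continuousAt hopen
  have hcont2 : ContinuousAt (deriv (deriv γ)) t1 :=
    (hC1'.continuousOn_deriv_of_isOpen isOpen_Ioi (by norm_num)).continuousAt hopen
  have hev2 : ∀ᶠ u in 𝓝 t1, ‖deriv γ u‖ < K :=
    (continuous_norm.continuousAt.tendsto.comp hcont1).eventually
      (eventually_lt_nhds (by simp only [hK]; linarith))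
  have hev3 : ∀ᶠ u in 𝓝 t1, ‖deriv (deriv γ) u‖ < M0 :=
    (continuous_norm.continuousAt.tendsto.comp hcont2).eventually
      (eventually_lt_nhds (by simp only [hM0]; linarith))
  have hev4 : ∀ᶠ u in 𝓝 t1, u ∈ Ioi t0 := hopen
  obtain ⟨ε, hε0, hball⟩ := Metric.eventually_nhds_iff.mp
    ((hev1.and (hev2.and (hev3.and hev4))))
  refine ⟨t1 + ε/2, by linarith, 4*M0*K/m^2, ?_⟩
  intro t ht
  obtain ⟨ht1, ht2⟩ := ht
  have htt1 : 0 < t - t1 := by linarith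
  have hIccball : ∀ u ∈ Icc t1 t, dist u t1 < ε := by
    intro u hu
    rw [Real.dist_eq, abs_lt]
    constructor <;> [linarith [hu.1]; linarith [hu.2]]
  have hIoi : ∀ u ∈ Icc t1 t, u ∈ Ioi t0 := fun u hu =>
    (hball (hIccball u hu)).2.2.2
  have hKb : ∀ u ∈ Icc t1 t, ‖deriv γ u‖ ≤ K := fun u hu =>
    le_of_lt (hball (hIccball u hu)).2.1
  -- Lipschitz bound for γ
  have hγlip : ∀ u ∈ Icc t1 t, ‖γ u - γ t1‖ ≤ K * (u - t1) := by
    intro u hu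
    have := Convex.norm_image_sub_le_of_norm_hasDerivWithin_le
      (f := γ) (f' := fun v => deriv γ v) (C := K) (s := Icc t1 t)
      (fun v hv => (hd1 v (hIoi v hv)).hasDerivWithinAt)
      hKb (convex_Icc t1 t) (left_mem_Icc.mpr (by linarith)) hu
    calc ‖γ u - γ t1‖ = ‖γ u - γ t1‖ := rfl
    _ ≤ K * ‖u - t1‖ := this
    _ = K * (u - t1) := by rw [Real.norm_eq_abs, abs_of_nonneg (by linarith [hu.1])]
  -- bound n t
  set n : ℝ → ℝ := fun u => (deriv γ u * (starRingEnd ℂ) (γ u - γ t1)).im with hn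
  have hnderiv : ∀ u ∈ Icc t1 t,
      HasDerivWithinAt n ((deriv (deriv γ) u * (starRingEnd ℂ) (γ u - γ t1)).im)
        (Icc t1 t) u := by
    intro u hu
    have hconj : HasDerivAt (fun v => (starRingEnd ℂ) (γ v - γ t1))
        ((starRingEnd ℂ) (deriv γ u)) u := by
      have := (Complex.conjCLE.toContinuousLinearMap.hasFDerivAt.comp_hasDerivAt u
        ((hd1 u (hIoi u hu)).sub_const (γ t1)))
      simp only [Function.comp_def, Complex.conjCLE_apply] at this
      exact this
    have hprod := (hd2 u (hIoi u hu)).mul hconj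
    have him := hasDerivAt_im_comp hprod
    have heq : (deriv (deriv γ) u * (starRingEnd ℂ) (γ u - γ t1)
        + deriv γ u * (starRingEnd ℂ) (deriv γ u)).im
        = (deriv (deriv γ) u * (starRingEnd ℂ) (γ u - γ t1)).im := by
      rw [Complex.add_im, Complex.mul_conj]
      simp
    rw [heq] at him
    exact him.hasDerivWithinAt
  have hnbd : ∀ u ∈ Icc t1 t,
      ‖(deriv (deriv γ) u * (starRingEnd ℂ) (γ u - γ t1)).im‖ ≤ M0 * (K * (t - t1)) := by
    intro u hu
    have h1 : |(deriv (deriv γ) u * (starRingEnd ℂ) (γ u - γ t1)).im|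
        ≤ ‖deriv (deriv γ) u * (starRingEnd ℂ) (γ u - γ t1)‖ :=
      Complex.abs_im_le_norm _
    rw [norm_mul] at h1
    have h2 : ‖(starRingEnd ℂ) (γ u - γ t1)‖ = ‖γ u - γ t1‖ :=
      Complex.norm_conj _
    rw [h2] at h1
    refine h1.trans ?_
    have h3 := le_of_lt (hball (hIccball u hu)).2.2.1
    have h4 := hγlip u hu
    have h5 : K * (u - t1) ≤ K * (t - t1) := by
      have : 0 ≤ K := by positivity
      nlinarith [hu.2]
    have habs2 : (0:ℝ) ≤ ‖γ u - γ t1‖ := norm_nonneg _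
    have hM00 : (0:ℝ) ≤ M0 := by positivity
    nlinarith [norm_nonneg (deriv (deriv γ) u)]
  have hnt : |n t| ≤ M0 * (K * (t - t1)) * (t - t1) := by
    have hn1 : n t1 = 0 := by
      simp only [hn, sub_self, map_zero, mul_zero, Complex.zero_im]
    have := Convex.norm_image_sub_le_of_norm_hasDerivWithin_le
      (f := n) (f' := fun u => (deriv (deriv γ) u * (starRingEnd ℂ) (γ u - γ t1)).im)
      (C := M0 * (K * (t - t1))) (s := Icc t1 t)
      hnderiv hnbd (convex_Icc t1 t) (left_mem_Icc.mpr (by linarith))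
      (right_mem_Icc.mpr (by linarith))
    rw [hn1, sub_zero, Real.norm_eq_abs, Real.norm_eq_abs,
      abs_of_nonneg (by linarith : (0:ℝ) ≤ t - t1)] at this
    exact this
  -- lower bound for denominator
  have hlow : m/2 * (t - t1) ≤ ‖γ t - γ t1‖ := by
    have hsl := (hball (hIccball t ⟨le_of_lt ht1, le_refl t⟩)).1 (ne_of_gt ht1)
    have heqs : ‖slope γ t1 t‖ = ‖γ t - γ t1‖ / (t - t1) := by
      rw [slope]
      rw [Complex.real_smul, norm_mul, Complex.norm_real, Real.norm_eq_abs,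
        abs_of_pos (inv_pos.2 htt1), inv_mul_eq_div]
      rfl
    rw [heqs] at hsl
    linarith [(lt_div_iff₀ htt1).mp hsl]
  -- final bound
  have hden : (m/2 * (t - t1))^2 ≤ Complex.normSq (γ t - γ t1) := by
    rw [Complex.normSq_eq_norm_sq]
    have h0 : 0 ≤ m/2 * (t - t1) := by positivity
    nlinarith
  have hfin : |(deriv γ t / (γ t - γ t1)).im|
      = |n t| / Complex.normSq (γ t - γ t1) := by
    rw [div_im_eq_mul_conj, abs_div, abs_of_nonneg (Complex.normSq_nonneg _)]
  rw [hfin]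
  have hstep : |n t| / Complex.normSq (γ t - γ t1)
      ≤ (M0 * (K * (t - t1)) * (t - t1)) / ((m/2 * (t - t1))^2) := by
    apply div_le_div₀ (by positivity) hnt (by positivity) hden
  refine hstep.trans (le_of_eq ?_)
  field_simp
  ring

lemma tail_lt_top {γ : ℝ → ℂ} {a : ℂ} {C T1 : ℝ}
    (hC : 1 ≤ C) (hT1C : 4 * C ≤ T1)
    (hd : ∀ t ∈ Ici T1, HasDerivAt γ (deriv γ t) t)
    (hcont : ContinuousOn (deriv γ) (Ici T1))
    (hcontγ : ContinuousOn γ (Ici T1))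
    (hlow : ∀ t ∈ Ici T1, t - C ≤ ‖γ t - a‖)
    (hhigh : ∀ t ∈ Ici T1, ‖γ t - a‖ ≤ t + C)
    (hg : ∀ t ∈ Ici T1, ‖deriv γ t‖ ^ 2 ≤ 1 + C / t) :
    ∫⁻ t in Ioi T1, ENNReal.ofReal |(deriv γ t / (γ t - a)).im| < ⊤ := by
  have hC0 : 0 < C := lt_of_lt_of_le one_pos hC
  have hT1pos : 0 < T1 := by linarith
  set Im : ℝ → ℝ := fun t => (deriv γ t / (γ t - a)).im with hIm
  have hpt : ∀ t ∈ Ioi T1, ENNReal.ofReal |Im t|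
      ≤ ENNReal.ofReal (1/(t*Real.sqrt t))
        + ENNReal.ofReal (t*Real.sqrt t * (Im t)^2) := by
    intro t ht
    have ht0 : 0 < t := lt_trans hT1pos ht
    have hb : 0 < t * Real.sqrt t := by positivity
    have h1 := amgm_abs (t*Real.sqrt t) (Im t) hb
    calc ENNReal.ofReal |Im t|
        ≤ ENNReal.ofReal (t*Real.sqrt t * (Im t)^2 + 1/(t*Real.sqrt t)) :=
          ENNReal.ofReal_le_ofReal h1
      _ = _ := by
          rw [ENNReal.ofReal_add (by positivity) (by positivity), add_comm]
  have hmeas : Measurable (fun t : ℝ => ENNReal.ofReal (1/(t*Real.sqrt t))) := by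
    apply Measurable.ennreal_ofReal
    exact measurable_const.div (measurable_id.mul Real.continuous_sqrt.measurable)
  have hA : ∫⁻ t in Ioi T1, ENNReal.ofReal (1/(t*Real.sqrt t)) < ⊤ := by
    apply lint_lt_top_of_le_integrable measurableSet_Ioi
      (integrableOn_Ioi_rpow_of_lt (by norm_num : (-3/2:ℝ) < -1) hT1pos)
    intro t ht
    have ht0 : 0 < t := lt_trans hT1pos ht
    have heq : t ^ (-3/2 : ℝ) = 1/(t*Real.sqrt t) := by
      have h32 : t ^ ((3:ℝ)/2) = t * Real.sqrt t := by
        rw [show (3:ℝ)/2 = 1 + 1/2 by norm_num, Real.rpow_add ht0, Real.rpow_one,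
          ← Real.sqrt_eq_rpow]
      rw [show (-3/2 : ℝ) = -((3:ℝ)/2) by norm_num, Real.rpow_neg ht0.le, h32, one_div]
    exact le_of_eq heq.symm
  have hB : ∫⁻ t in Ioi T1, ENNReal.ofReal (t*Real.sqrt t * (Im t)^2) < ⊤ := by
    rw [Ioi_eq_iUnion_Ioc hT1pos,
      lintegral_iUnion (fun k => measurableSet_Ioc) (disjoint_blocks hT1pos)]
    have hsq2 : (1:ℝ) < Real.sqrt 2 := by
      have h1 : Real.sqrt 1 < Real.sqrt 2 := Real.sqrt_lt_sqrt zero_le_one one_lt_two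
      simpa using h1
    have hblock : ∀ k : ℕ, ∫⁻ t in Ioc ((2:ℝ)^k * T1) (2^(k+1) * T1),
        ENNReal.ofReal (t*Real.sqrt t * (Im t)^2)
        ≤ ENNReal.ofReal (80*C/Real.sqrt T1) * (ENNReal.ofReal (1/Real.sqrt 2))^k := by
      intro k
      have hT1k : T1 ≤ 2^k * T1 := by
        nlinarith [one_le_pow₀ (by norm_num : (1:ℝ) ≤ 2) (n := k)]
      have hset : Ioc ((2:ℝ)^k * T1) (2^(k+1) * T1) = Ioc ((2:ℝ)^k * T1) (2*(2^k * T1)) := by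
        congr 1
        ring
      rw [hset]
      refine (block_bound hC hT1C hd hcont hcontγ hlow hhigh hg hT1k).trans ?_
      have hk0 : (0:ℝ) < (Real.sqrt 2)^k := pow_pos (by linarith) k
      have hT1s : (0:ℝ) < Real.sqrt T1 := Real.sqrt_pos.2 hT1pos
      have heq : 80*C/Real.sqrt ((2:ℝ)^k * T1) = (80*C/Real.sqrt T1) * (1/Real.sqrt 2)^k := by
        rw [sqrt_two_pow_mul T1 hT1pos.le k, one_div_pow]
        field_simp
      rw [heq, ENNReal.ofReal_mul (by positivity),
        ENNReal.ofReal_pow (by positivity)]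
    refine lt_of_le_of_lt (ENNReal.tsum_le_tsum hblock) ?_
    rw [ENNReal.tsum_mul_left, ENNReal.tsum_geometric]
    apply ENNReal.mul_lt_top ENNReal.ofReal_lt_top
    refine ENNReal.inv_lt_top.mpr (tsub_pos_of_lt ?_)
    rw [← ENNReal.ofReal_one]
    exact (ENNReal.ofReal_lt_ofReal_iff one_pos).mpr ((div_lt_one (by positivity)).mpr hsq2)
  calc ∫⁻ t in Ioi T1, ENNReal.ofReal |Im t|
      ≤ ∫⁻ t in Ioi T1, (ENNReal.ofReal (1/(t*Real.sqrt t))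
          + ENNReal.ofReal (t*Real.sqrt t * (Im t)^2)) :=
        setLIntegral_mono' measurableSet_Ioi hpt
    _ = (∫⁻ t in Ioi T1, ENNReal.ofReal (1/(t*Real.sqrt t)))
          + ∫⁻ t in Ioi T1, ENNReal.ofReal (t*Real.sqrt t * (Im t)^2) :=
        lintegral_add_left hmeas _
    _ < ⊤ := ENNReal.add_lt_top.mpr ⟨hA, hB⟩


/-- **Admissible Curves Have Variation Numbers.**
Let `γ` be an admissible curve on `(t₀, ∞)`. (1) If `a` lies outside the closure of the
image of `γ` and `|γ'|` is bounded as `t ↘ t₀`, then `α(γ, a)` is finite. (2) For every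
`t₁ > t₀`, `α(γ|_{(t₁,∞)}, γ(t₁))` is finite. (3) For every `t₁ > t₀`,
`α(γ'|_{(t₁,∞)}, 0)` is finite. -/
theorem admissible_variation_finite (t0 : ℝ) (γ : ℝ → ℂ) (h : Admissible t0 γ) :
    (∀ a : ℂ, a ∉ closure (γ '' Set.Ioi t0) →
      (∃ c : ℝ, ∀ᶠ t in nhdsWithin t0 (Set.Ioi t0), ‖deriv γ t‖ ≤ c) →
      variation γ t0 a < ⊤) ∧
    (∀ t1 : ℝ, t0 < t1 → variation γ t1 (γ t1) < ⊤) ∧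
    (∀ t1 : ℝ, t0 < t1 → variation (deriv γ) t1 0 < ⊤) := by
  obtain ⟨hinj, hC2, hner, hc1, hc2, hc3⟩ := h
  have hd1 : ∀ u ∈ Ioi t0, HasDerivAt γ (deriv γ u) u := fun u hu =>
    ((hC2.differentiableOn (by norm_num)).differentiableAt
      (isOpen_Ioi.mem_nhds hu)).hasDerivAt
  have hdercont : ContinuousOn (deriv γ) (Ioi t0) :=
    hC2.continuousOn_deriv_of_isOpen isOpen_Ioi (by norm_num)
  have hγcont : ContinuousOn γ (Ioi t0) := hC2.continuousOn
  have hC1' : ContDiffOn ℝ 1 (deriv γ) (Ioi t0) :=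
    hC2.deriv_of_isOpen isOpen_Ioi (by norm_num)
  have hd2 : ∀ u ∈ Ioi t0, HasDerivAt (deriv γ) (deriv (deriv γ) u) u := fun u hu =>
    ((hC1'.differentiableOn (by norm_num)).differentiableAt
      (isOpen_Ioi.mem_nhds hu)).hasDerivAt
  have hder2cont : ContinuousOn (deriv (deriv γ)) (Ioi t0) :=
    hC1'.continuousOn_deriv_of_isOpen isOpen_Ioi le_rfl
  -- the common tail estimate
  have tail : ∀ a : ℂ, ∃ T1, t0 < T1 ∧ ∀ T, T1 ≤ T →
      ∫⁻ t in Ioi T, ENNReal.ofReal |(deriv γ t / (γ t - a)).im| < ⊤ := by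
    intro a
    obtain ⟨c1, hc1'⟩ := hc1
    obtain ⟨c2, hc2'⟩ := hc2
    obtain ⟨M1, hM1⟩ := eventually_atTop.mp hc1'
    obtain ⟨M2, hM2⟩ := eventually_atTop.mp hc2'
    set C := |c1| + ‖a‖ + 2*|c2| + |c2|^2 + 1 with hCdef
    have hC1le : 1 ≤ C := by
      have : 0 ≤ |c1| + ‖a‖ + 2*|c2| + |c2|^2 := by positivity
      linarith
    set T1 := max (max M1 M2) (max (4*C) (max (t0 + 1) 1)) with hT1def
    have h4C : 4*C ≤ T1 := le_trans (le_max_left _ _) (le_max_right _ _)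
    have ht0T1 : t0 < T1 :=
      lt_of_lt_of_le (by linarith : t0 < t0 + 1)
        (le_trans (le_trans (le_max_left _ _) (le_max_right _ _)) (le_max_right _ _))
    have h1T1 : (1:ℝ) ≤ T1 :=
      le_trans (le_trans (le_max_right _ _) (le_max_right _ _)) (le_max_right _ _)
    have hM1T1 : M1 ≤ T1 := le_trans (le_max_left _ _) (le_max_left _ _)
    have hM2T1 : M2 ≤ T1 := le_trans (le_max_right _ _) (le_max_left _ _)
    refine ⟨T1, ht0T1, ?_⟩
    intro T hT
    have hsub : Ici T ⊆ Ioi t0 := fun x hx =>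
      lt_of_lt_of_le ht0T1 (le_trans hT hx)
    apply tail_lt_top (C := C) (T1 := T) hC1le (by linarith)
      (fun t ht => hd1 t (hsub ht)) (hdercont.mono hsub) (hγcont.mono hsub)
    · intro t ht
      have htT1 : T1 ≤ t := le_trans hT ht
      have h1 := abs_le.mp (hM1 t (by linarith))
      have h2 := norm_sub_norm_le (γ t) a
      have : |c1| ≥ c1 := le_abs_self c1
      simp only [hCdef]
      have h3 : 0 ≤ 2*|c2| + |c2|^2 := by positivity
      linarith [abs_nonneg c1, neg_abs_le c1]
    · intro t ht
      have htT1 : T1 ≤ t := le_trans hT ht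
      have h1 := abs_le.mp (hM1 t (by linarith))
      have h2 := norm_sub_le (γ t) a
      simp only [hCdef]
      have h3 : 0 ≤ 2*|c2| + |c2|^2 := by positivity
      linarith [le_abs_self c1]
    · intro t ht
      have htT1 : T1 ≤ t := le_trans hT ht
      have ht1 : (1:ℝ) ≤ t := le_trans h1T1 htT1
      have ht0 : (0:ℝ) < t := by linarith
      have h1 := abs_le.mp (hM2 t (by linarith))
      have hle : ‖deriv γ t‖ ≤ 1 + |c2|/t := by
        have : c2/t ≤ |c2|/t := by gcongr; exact le_abs_self c2
        linarith [h1.2]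
      have hsq : ‖deriv γ t‖^2 ≤ (1 + |c2|/t)^2 := by
        apply pow_le_pow_left₀ (norm_nonneg _) hle
      have hexp : (1 + |c2|/t)^2 = 1 + (2*|c2| + |c2|^2/t)/t := by
        field_simp
        ring
      have hsmall : |c2|^2/t ≤ |c2|^2 := div_le_self (by positivity) ht1
      have hfin : (2*|c2| + |c2|^2/t)/t ≤ C/t := by
        have habs0 : 0 ≤ ‖a‖ := norm_nonneg _
        have hnum : 2*|c2| + |c2|^2/t ≤ C := by
          simp only [hCdef]
          linarith [abs_nonneg c1]
        gcongr
      calc ‖deriv γ t‖^2 ≤ (1 + |c2|/t)^2 := hsq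
        _ = 1 + (2*|c2| + |c2|^2/t)/t := hexp
        _ ≤ 1 + C/t := by linarith
  -- part 3 tail
  have tail3 : ∃ T1, t0 < T1 ∧ ∀ T, T1 ≤ T →
      ∫⁻ t in Ioi T, ENNReal.ofReal |(deriv (deriv γ) t / (deriv γ t - 0)).im| < ⊤ := by
    obtain ⟨c2, hc2'⟩ := hc2
    obtain ⟨c3, hc3'⟩ := hc3
    obtain ⟨M2, hM2⟩ := eventually_atTop.mp hc2'
    obtain ⟨M3, hM3⟩ := eventually_atTop.mp hc3'
    set T1 := max (max M2 M3) (max (2*|c2| + 1) (max (t0 + 1) 1)) with hT1def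
    have ht0T1 : t0 < T1 :=
      lt_of_lt_of_le (by linarith : t0 < t0 + 1)
        (le_trans (le_trans (le_max_left _ _) (le_max_right _ _)) (le_max_right _ _))
    refine ⟨T1, ht0T1, ?_⟩
    intro T hT
    have hTpos : 0 < T := by
      have : (1:ℝ) ≤ T1 :=
        le_trans (le_trans (le_max_right _ _) (le_max_right _ _)) (le_max_right _ _)
      linarith
    apply lint_lt_top_of_le_integrable measurableSet_Ioi
      (((integrableOn_Ioi_rpow_of_lt (by norm_num : (-2:ℝ) < -1) hTpos)).const_mul (2*|c3|))
    intro t ht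
    have htT : T < t := ht
    have htT1 : T1 < t := lt_of_le_of_lt hT htT
    have hM2t : M2 ≤ t := le_trans (le_trans (le_max_left _ _) (le_max_left _ _)) htT1.le
    have hM3t : M3 ≤ t := le_trans (le_trans (le_max_right _ _) (le_max_left _ _)) htT1.le
    have hc2t : 2*|c2| + 1 ≤ t :=
      le_trans (le_trans (le_max_left _ _) (le_max_right _ _)) htT1.le
    have ht0 : (0:ℝ) < t := lt_of_lt_of_le (by positivity) hc2t
    have h1 := abs_le.mp (hM2 t hM2t)
    have hlow : (1:ℝ)/2 ≤ ‖deriv γ t‖ := by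
      have hc2' : c2/t ≤ |c2|/t := by gcongr; exact le_abs_self c2
      have hc2half : |c2|/t ≤ 1/2 := by
        rw [div_le_iff₀ ht0]
        linarith [abs_nonneg c2]
      linarith [h1.1]
    have h3 := hM3 t hM3t
    have hc3t : ‖deriv (deriv γ) t‖ ≤ |c3|/t^2 := by
      refine h3.trans ?_
      gcongr
      exact le_abs_self c3
    have hrpow : t ^ (-2:ℝ) = (t^(2:ℕ))⁻¹ := by
      rw [← Real.rpow_natCast t 2, ← Real.rpow_neg ht0.le]
      norm_num
    calc |(deriv (deriv γ) t / (deriv γ t - 0)).im|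
        ≤ ‖deriv (deriv γ) t‖ / ‖deriv γ t - 0‖ :=
          abs_im_div_le _ _
      _ ≤ (|c3|/t^2) / (1/2) := by
          rw [sub_zero]
          exact div_le_div₀ (by positivity) hc3t (by norm_num) hlow
      _ = 2*|c3| * t ^ (-2:ℝ) := by rw [hrpow]; field_simp
  refine ⟨?_, ?_, ?_⟩
  · -- part 1
    intro a ha hbdd
    obtain ⟨T1, hT1t0, htail⟩ := tail a
    obtain ⟨δ, hδ0, hballs⟩ := Metric.isOpen_iff.mp isClosed_closure.isOpen_compl a ha
    have hδa : ∀ t ∈ Ioi t0, δ ≤ ‖γ t - a‖ := by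
      intro t ht
      by_contra hlt
      push_neg at hlt
      have hmem : γ t ∈ Metric.ball a δ := by
        rw [Metric.mem_ball, Complex.dist_eq]
        exact hlt
      exact hballs hmem (subset_closure (mem_image_of_mem γ ht))
    obtain ⟨c, hc⟩ := hbdd
    obtain ⟨u, hu, hIoo⟩ := mem_nhdsGT_iff_exists_Ioo_subset.mp hc
    set s := (t0 + u)/2 with hsdef
    have htu : t0 < u := hu
    have hs0 : t0 < s := by simp only [hsdef]; linarith
    have hsu : s < u := by simp only [hsdef]; linarith
    have hcnn : 0 ≤ c := le_trans (norm_nonneg _) (hIoo ⟨hs0, hsu⟩)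
    unfold variation
    refine ENNReal.mul_lt_top ENNReal.ofReal_lt_top ?_
    rw [lintegral_split3 hs0.le (le_max_left s T1)]
    refine ENNReal.add_lt_top.mpr ⟨ENNReal.add_lt_top.mpr ⟨?_, ?_⟩, ?_⟩
    · apply lint_Ioc_lt_top_of_bound (M := c/δ)
      intro t ht
      have h1 : ‖deriv γ t‖ ≤ c := hIoo ⟨ht.1, lt_of_le_of_lt ht.2 hsu⟩
      have h2 := hδa t ht.1
      exact (abs_im_div_le _ _).trans (div_le_div₀ hcnn h1 hδ0 h2)
    · apply lint_Ioc_lt_top_of_continuousOn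
      have hsubm : Icc s (max s T1) ⊆ Ioi t0 := fun x hx => lt_of_lt_of_le hs0 hx.1
      have hden : ∀ t ∈ Icc s (max s T1), γ t - a ≠ 0 := by
        intro t ht h0
        have := hδa t (hsubm ht)
        rw [h0, norm_zero] at this
        linarith
      exact (Complex.continuous_im.comp_continuousOn
        ((hdercont.mono hsubm).div ((hγcont.mono hsubm).sub continuousOn_const) hden)).abs
    · exact htail (max s T1) (le_max_right _ _)
  · -- part 2
    intro t1 h0t1
    obtain ⟨T1, hT1t0, htail⟩ := tail (γ t1)
    obtain ⟨s, hs, M, hM⟩ := local_bound_at_left h0t1 hC2 (hner t1 h0t1)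
    unfold variation
    refine ENNReal.mul_lt_top ENNReal.ofReal_lt_top ?_
    rw [lintegral_split3 hs.le (le_max_left s T1)]
    refine ENNReal.add_lt_top.mpr ⟨ENNReal.add_lt_top.mpr ⟨?_, ?_⟩, ?_⟩
    · exact lint_Ioc_lt_top_of_bound hM
    · apply lint_Ioc_lt_top_of_continuousOn
      have hsubm : Icc s (max s T1) ⊆ Ioi t0 := fun x hx =>
        lt_trans h0t1 (lt_of_lt_of_le hs hx.1)
      have hden : ∀ t ∈ Icc s (max s T1), γ t - γ t1 ≠ 0 := by
        intro t ht h0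
        have heq : γ t = γ t1 := by rwa [sub_eq_zero] at h0
        have hteq : t = t1 := hinj (hsubm ht) h0t1 heq
        have hts : s ≤ t := ht.1
        linarith
      exact (Complex.continuous_im.comp_continuousOn
        ((hdercont.mono hsubm).div ((hγcont.mono hsubm).sub continuousOn_const) hden)).abs
    · exact htail (max s T1) (le_max_right _ _)
  · -- part 3
    intro t1 h0t1
    obtain ⟨T1, hT1t0, htail⟩ := tail3
    unfold variation
    refine ENNReal.mul_lt_top ENNReal.ofReal_lt_top ?_
    rw [lintegral_split3 (le_refl t1) (le_max_left t1 T1)]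
    refine ENNReal.add_lt_top.mpr ⟨ENNReal.add_lt_top.mpr ⟨?_, ?_⟩, ?_⟩
    · exact lint_Ioc_lt_top_of_bound (M := 0)
        (fun t ht => absurd ht.1 (not_lt.mpr ht.2))
    · apply lint_Ioc_lt_top_of_continuousOn
      have hsubm : Icc t1 (max t1 T1) ⊆ Ioi t0 := fun x hx => lt_of_lt_of_le h0t1 hx.1
      have hden : ∀ t ∈ Icc t1 (max t1 T1), deriv γ t - 0 ≠ 0 := fun t ht => by
        rw [sub_zero]; exact hner t (hsubm ht)
      exact (Complex.continuous_im.comp_continuousOn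
        ((hder2cont.mono hsubm).div ((hdercont.mono hsubm).sub continuousOn_const) hden)).abs
    · exact htail (max t1 T1) (le_max_right _ _)
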